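/- Small gain lemma for asymptotic amplitude: if behaviors R and S have Cauchy gains γ₁, γ₂ ∈ K∞ respectively, and γ₁(γ₂(r)) < r for all r > 0, then for every pair (ω, η) with (ω, η) ∈ R and (η, ω) ∈ S and ‖ω‖_aa < ∞, one has ‖ω‖_aa = ‖η‖_aa = 0. -/

import Mathlib

open Filter
open scoped NNReal ENNReal

/-- Asymptotic amplitude of a signal `ω : ℝ≥0 → M`:
`‖ω‖_aa = lim_{T→∞} sup_{t,s ≥ T} dist (ω t) (ω s)`. -/
noncomputable def asympAmp {M : Type*} [PseudoMetricSpace M] (ω : ℝ≥0 → M) : ℝ≥0∞ :=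
  Filter.limsup (fun p : ℝ≥0 × ℝ≥0 => edist (ω p.1) (ω p.2)) (atTop ×ˢ atTop)

/-- A behavior with input-value space `U` and output-value space `Y`: a relation between
`U`-valued and `Y`-valued signals. -/
abbrev Behavior (U Y : Type*) := Set ((ℝ≥0 → U) × (ℝ≥0 → Y))

/-- Class `K∞` functions: continuous, strictly increasing, unbounded, vanishing at `0`. -/
def KInfty (γ : ℝ≥0 → ℝ≥0) : Prop :=
  Continuous γ ∧ StrictMono γ ∧ γ 0 = 0 ∧ Tendsto γ atTop atTop

/-- Extension of a gain function to `[0,∞]`, sending `∞` to `∞`. -/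
noncomputable def extGain (γ : ℝ≥0 → ℝ≥0) : ℝ≥0∞ → ℝ≥0∞ :=
  fun x => if x = ⊤ then ⊤ else (γ x.toNNReal : ℝ≥0∞)

/-- `R` has Cauchy gain `γ` : `‖η‖_aa ≤ γ (‖ω‖_aa)` for all `(ω, η) ∈ R`. -/
def HasCauchyGain {U Y : Type*} [MetricSpace U] [MetricSpace Y]
    (R : Behavior U Y) (γ : ℝ≥0 → ℝ≥0) : Prop :=
  ∀ p ∈ R, asympAmp p.2 ≤ extGain γ (asympAmp p.1)

/-- `R` has incremental limit gain `κ` : whenever both inputs converge,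
`limsup_{t→∞} dist (η₁ t) (η₂ t) ≤ κ (dist ω₁^∞ ω₂^∞)`. -/
def HasIncrLimitGain {U Y : Type*} [MetricSpace U] [MetricSpace Y]
    (R : Behavior U Y) (κ : ℝ≥0 → ℝ≥0) : Prop :=
  ∀ p q, p ∈ R → q ∈ R → ∀ u₁ u₂ : U,
    Tendsto p.1 atTop (nhds u₁) → Tendsto q.1 atTop (nhds u₂) →
    Filter.limsup (fun t => edist (p.2 t) (q.2 t)) atTop ≤ (κ (nndist u₁ u₂) : ℝ≥0∞)

/-- Small gain lemma for asymptotic amplitude. -/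
theorem stmt2 {U Y : Type*} [MetricSpace U] [MetricSpace Y]
    [CompleteSpace U] [CompleteSpace Y]
    (R : Behavior U Y) (S : Behavior Y U) (γ₁ γ₂ : ℝ≥0 → ℝ≥0)
    (hγ₁ : KInfty γ₁) (hγ₂ : KInfty γ₂)
    (hR : HasCauchyGain R γ₁) (hS : HasCauchyGain S γ₂)
    (hsg : ∀ r : ℝ≥0, 0 < r → γ₁ (γ₂ r) < r)
    (ω : ℝ≥0 → U) (η : ℝ≥0 → Y)
    (hmem : (ω, η) ∈ R) (hmem' : (η, ω) ∈ S) (hfin : asympAmp ω ≠ ⊤) :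
    asympAmp ω = 0 ∧ asympAmp η = 0 := by
  have hb := hR (ω, η) hmem
  have ha := hS (η, ω) hmem'
  simp only [extGain, if_neg hfin] at hb
  have hbfin : asympAmp η ≠ ⊤ := fun h => by simp [h] at hb
  simp only [extGain, if_neg hbfin] at ha
  set a' := (asympAmp ω).toNNReal with ha'
  set b' := (asympAmp η).toNNReal with hb'
  have haeq : (a' : ℝ≥0∞) = asympAmp ω := ENNReal.coe_toNNReal hfin
  have hbeq : (b' : ℝ≥0∞) = asympAmp η := ENNReal.coe_toNNReal hbfin
  rw [← hbeq] at hb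
  rw [← haeq] at ha
  have hb2 : b' ≤ γ₁ a' := ENNReal.coe_le_coe.mp hb
  have ha2 : a' ≤ γ₂ b' := ENNReal.coe_le_coe.mp ha
  have hbz : b' = 0 := by
    by_contra h
    have hpos : 0 < b' := pos_iff_ne_zero.mpr h
    have := hsg b' hpos
    have hmono : γ₁ a' ≤ γ₁ (γ₂ b') := hγ₁.2.1.monotone ha2
    exact (LE.le.not_gt (hb2.trans hmono)) this
  have haz : a' = 0 := by
    have := ha2
    rw [hbz, hγ₂.2.2.1] at this
    exact le_antisymm this (by positivity)
  constructor
  · rw [← haeq, haz]; rfl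
  · rw [← hbeq, hbz]; rfl
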